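/- Let n, m, r be positive integers with r ≥ 2, and let H be an r-uniform multi-hypergraph with n vertices and m edges. Let X_H be the number of vertices with nonzero in-degree after a random orientation of the edges of H. Then Var(X_H) ≤ n/4. -/

import Mathlib

open Finset

/-- Expectation of a real-valued random variable `X` on a finite sample space with
probability mass function `p`. -/
noncomputable def expectation {Ω : Type*} [Fintype Ω] (p : Ω → ℝ) (X : Ω → ℝ) : ℝ :=
  ∑ ω, p ω * X ω

/-- Variance of a real-valued random variable `X` on a finite sample space with
probability mass function `p`. -/
noncomputable def finVariance {Ω : Type*} [Fintype Ω] (p : Ω → ℝ) (X : Ω → ℝ) : ℝ :=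
  expectation p (fun ω => (X ω - expectation p X) ^ 2)

lemma aux_sum_factor {V : Type*} [Fintype V] [DecidableEq V] {m : ℕ} (E : Fin m → Finset V)
    (g : Fin m → V → ℝ) :
    ∑ f : {f : Fin m → V // ∀ i, f i ∈ E i}, ∏ i, g i (f.1 i) = ∏ i, ∑ x ∈ E i, g i x := by
  rw [Finset.prod_univ_sum (t := E) (f := g)]
  exact (Finset.sum_subtype (Fintype.piFinset E)
    (fun f => Fintype.mem_piFinset) (fun f => ∏ i, g i (f i))).symm

lemma aux_card_key {V : Type*} [DecidableEq V] (s : Finset V) (r : ℕ) (hs : s.card = r)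
    (hr : 2 ≤ r) (u v : V) (huv : u ≠ v) :
    (s \ {u, v}).card * r ≤ (s \ {u}).card * (s \ {v}).card := by
  have h1 : s \ {u} = s.erase u := by ext x; simp [and_comm]
  have h1' : s \ {v} = s.erase v := by ext x; simp [and_comm]
  have h2 : s \ {u, v} = (s.erase u).erase v := by ext x; simp; tauto
  rw [h1, h1', h2]
  by_cases hu : u ∈ s <;> by_cases hv : v ∈ s <;>
    simp [Finset.card_erase_of_mem, Finset.erase_eq_of_notMem, hu, hv, huv,
      Finset.mem_erase, hs, Finset.card_erase_eq_ite, Ne.symm huv] <;>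
  obtain ⟨k, rfl⟩ : ∃ k, r = k + 2 := ⟨r - 2, by omega⟩ <;>
  · simp [Nat.add_sub_cancel]; nlinarith

lemma aux_finVar_eq {Ω : Type*} [Fintype Ω] (p X : Ω → ℝ) (h1 : ∑ ω, p ω = 1) :
    finVariance p X = expectation p (fun ω => X ω ^ 2) - (expectation p X) ^ 2 := by
  set e := expectation p X with he
  show ∑ ω, p ω * (X ω - e) ^ 2 = (∑ ω, p ω * X ω ^ 2) - e ^ 2
  have hpt : ∀ ω, p ω * (X ω - e) ^ 2
      = p ω * X ω ^ 2 - 2 * e * (p ω * X ω) + e ^ 2 * p ω := fun ω => by ring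
  simp_rw [hpt]
  rw [Finset.sum_add_distrib, Finset.sum_sub_distrib, ← Finset.mul_sum, ← Finset.mul_sum, h1]
  have : e = ∑ ω, p ω * X ω := he
  rw [← this]; ring

/-- Let `H` be an `r`-uniform multi-hypergraph with `n` vertices and edges
`E 0, …, E (m-1)` (each an `r`-element subset of `V`, `r ≥ 2`).  A random orientation
assigns to each edge, independently and uniformly, one of its `r` vertices; thus each
orientation `f` (an element of the subtype `{f : Fin m → V // ∀ i, f i ∈ E i}`) has
probability `1 / r ^ m`.  If `X_H` is the number of vertices with nonzero in-degree,
then `Var(X_H) ≤ n / 4`. -/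
theorem variance_nonzero_indegree_le {V : Type*} [Fintype V] [DecidableEq V]
    (n m r : ℕ) (hn : 0 < n) (hm : 0 < m) (hr : 2 ≤ r)
    (hV : Fintype.card V = n)
    (E : Fin m → Finset V) (hE : ∀ i, (E i).card = r) :
    finVariance
        (fun _ : {f : Fin m → V // ∀ i, f i ∈ E i} => (1 : ℝ) / r ^ m)
        (fun f => ((Finset.univ.filter fun v => ∃ i, f.1 i = v).card : ℝ)) ≤
      (n : ℝ) / 4 := by
  have hr0 : 0 < r := by omega
  have hN : (0 : ℝ) < (r : ℝ) ^ m := by positivity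
  set N : ℝ := (r : ℝ) ^ m with hNdef
  -- indicators
  set I : V → {f : Fin m → V // ∀ i, f i ∈ E i} → ℝ :=
    fun v f => if ∃ i, f.1 i = v then 1 else 0 with hI
  set J : V → {f : Fin m → V // ∀ i, f i ∈ E i} → ℝ :=
    fun v f => ∏ i, if f.1 i = v then (0:ℝ) else 1 with hJ
  have hJI : ∀ v f, J v f = 1 - I v f := by
    intro v f
    by_cases h : ∃ i, f.1 i = v
    · obtain ⟨i, hi⟩ := h
      simp only [hI, hJ]
      rw [if_pos ⟨i, hi⟩, Finset.prod_eq_zero (Finset.mem_univ i) (by simp [hi])]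
      norm_num
    · simp only [hI, hJ]
      rw [if_neg h, Finset.prod_eq_one fun i _ => if_neg fun hh => h ⟨i, hh⟩]
      norm_num
  -- counting sums
  have hsum_one : ∑ f : {f : Fin m → V // ∀ i, f i ∈ E i}, (1:ℝ) = N := by
    have := aux_sum_factor E (fun _ _ => (1:ℝ))
    simpa [hE, hNdef] using this
  have hsumJ : ∀ v, ∑ f : {f : Fin m → V // ∀ i, f i ∈ E i}, J v f
      = ∏ i, ((E i \ {v}).card : ℝ) := by
    intro v
    have h := aux_sum_factor E (fun _ x => if x = v then (0:ℝ) else 1)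
    rw [hJ]
    rw [h]
    refine Finset.prod_congr rfl fun i _ => ?_
    have hpt : ∀ x, (if x = v then (0:ℝ) else 1) = if ¬ x = v then 1 else 0 := by
      intro x; by_cases h : x = v <;> simp [h]
    simp_rw [hpt]
    rw [Finset.sum_boole]
    have : Finset.filter (fun x => ¬ x = v) (E i) = E i \ {v} := by ext x; simp
    rw [this]
  have hsumJJ : ∀ u v, ∑ f : {f : Fin m → V // ∀ i, f i ∈ E i}, J u f * J v f
      = ∏ i, ((E i \ {u, v}).card : ℝ) := by
    intro u v
    have h := aux_sum_factor E
      (fun _ x => (if x = u then (0:ℝ) else 1) * (if x = v then (0:ℝ) else 1))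
    have hJJ : ∀ f : {f : Fin m → V // ∀ i, f i ∈ E i},
        J u f * J v f = ∏ i, ((if f.1 i = u then (0:ℝ) else 1) * (if f.1 i = v then (0:ℝ) else 1)) := by
      intro f; rw [hJ]; rw [← Finset.prod_mul_distrib]
    simp_rw [hJJ]
    rw [h]
    refine Finset.prod_congr rfl fun i _ => ?_
    have hpt : ∀ x, (if x = u then (0:ℝ) else 1) * (if x = v then (0:ℝ) else 1)
        = if ¬ (x = u ∨ x = v) then 1 else 0 := by
      intro x; by_cases h1 : x = u <;> by_cases h2 : x = v <;> simp [h1, h2]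
    simp_rw [hpt]
    rw [Finset.sum_boole]
    have : Finset.filter (fun x => ¬ (x = u ∨ x = v)) (E i) = E i \ {u, v} := by
      ext x; simp <;> tauto
    rw [this]
  have hSu : ∀ u, ∑ f : {f : Fin m → V // ∀ i, f i ∈ E i}, I u f
      = N - ∏ i, ((E i \ {u}).card : ℝ) := by
    intro u
    have hpt : ∀ f : {f : Fin m → V // ∀ i, f i ∈ E i}, I u f = 1 - J u f := by
      intro f; rw [hJI]; ring
    simp_rw [hpt]
    rw [Finset.sum_sub_distrib, hsum_one, hsumJ]
  have hSuv : ∀ u v, ∑ f : {f : Fin m → V // ∀ i, f i ∈ E i}, I u f * I v f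
      = N - ∏ i, ((E i \ {u}).card : ℝ) - ∏ i, ((E i \ {v}).card : ℝ)
        + ∏ i, ((E i \ {u, v}).card : ℝ) := by
    intro u v
    have hpt : ∀ f : {f : Fin m → V // ∀ i, f i ∈ E i},
        I u f * I v f = 1 - J u f - J v f + J u f * J v f := by
      intro f
      have h1 : I u f = 1 - J u f := by have := hJI u f; linarith
      have h2 : I v f = 1 - J v f := by have := hJI v f; linarith
      rw [h1, h2]; ring
    simp_rw [hpt]
    rw [Finset.sum_add_distrib, Finset.sum_sub_distrib, Finset.sum_sub_distrib,
      hsum_one, hsumJ, hsumJ, hsumJJ]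
  -- probability sums to one
  have hp1 : ∑ f : {f : Fin m → V // ∀ i, f i ∈ E i}, (1:ℝ) / (r:ℝ) ^ m = 1 := by
    rw [← Finset.sum_div, hsum_one, hNdef, div_self (ne_of_gt hN)]
  -- rewrite the random variable as a sum of indicators
  have hXfun : (fun f : {f : Fin m → V // ∀ i, f i ∈ E i} =>
      ((Finset.univ.filter fun v => ∃ i, f.1 i = v).card : ℝ)) = fun f => ∑ v, I v f := by
    funext f
    rw [Finset.card_filter]
    push_cast
    simp [hI]
  rw [hXfun]
  rw [aux_finVar_eq _ _ hp1]
  -- expectation as normalized sum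
  have hexp : ∀ Y : {f : Fin m → V // ∀ i, f i ∈ E i} → ℝ,
      expectation (fun _ => (1:ℝ) / (r:ℝ) ^ m) Y = (∑ f, Y f) / N := by
    intro Y
    show ∑ f : {f : Fin m → V // ∀ i, f i ∈ E i}, (1:ℝ)/(r:ℝ)^m * Y f = _
    rw [Finset.sum_div]
    refine Finset.sum_congr rfl fun f _ => ?_
    rw [hNdef]; ring
  -- second moment
  have hEX2 : expectation (fun _ => (1:ℝ) / (r:ℝ) ^ m) (fun f => (∑ v, I v f) ^ 2)
      = ∑ u, ∑ v, (∑ f : {f : Fin m → V // ∀ i, f i ∈ E i}, I u f * I v f) / N := by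
    rw [hexp]
    have h1 : ∀ f : {f : Fin m → V // ∀ i, f i ∈ E i},
        (∑ v, I v f) ^ 2 = ∑ u, ∑ v, I u f * I v f := by
      intro f; rw [sq, Finset.sum_mul_sum]
    simp_rw [h1]
    rw [Finset.sum_comm, Finset.sum_div]
    refine Finset.sum_congr rfl fun u _ => ?_
    rw [Finset.sum_comm, Finset.sum_div]
  have hEX : expectation (fun _ => (1:ℝ) / (r:ℝ) ^ m) (fun f => ∑ v, I v f)
      = ∑ v, (∑ f : {f : Fin m → V // ∀ i, f i ∈ E i}, I v f) / N := by
    rw [hexp, Finset.sum_comm, Finset.sum_div]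
  rw [hEX2, hEX]
  rw [sq, Finset.sum_mul_sum]
  rw [← Finset.sum_sub_distrib]
  have hrw : ∀ u : V, (∑ v, (∑ f : {f : Fin m → V // ∀ i, f i ∈ E i}, I u f * I v f) / N)
      - ∑ v, ((∑ f, I u f) / N * ((∑ f, I v f) / N))
      = ∑ v, ((∑ f : {f : Fin m → V // ∀ i, f i ∈ E i}, I u f * I v f) / N
        - (∑ f, I u f) / N * ((∑ f, I v f) / N)) := fun u => (Finset.sum_sub_distrib _ _).symm
  simp_rw [hrw]
  -- termwise bound
  have hterm : ∀ u v : V, (∑ f : {f : Fin m → V // ∀ i, f i ∈ E i}, I u f * I v f) / N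
      - (∑ f, I u f) / N * ((∑ f, I v f) / N) ≤ if u = v then (1:ℝ)/4 else 0 := by
    intro u v
    by_cases huv : u = v
    · subst huv
      rw [if_pos rfl]
      have hII : ∀ f : {f : Fin m → V // ∀ i, f i ∈ E i}, I u f * I u f = I u f := by
        intro f; simp only [hI]; by_cases h : ∃ i, f.1 i = u <;> simp [h]
      simp_rw [hII]
      set q : ℝ := (∑ f : {f : Fin m → V // ∀ i, f i ∈ E i}, I u f) / N with hq
      nlinarith [sq_nonneg (q - 1/2)]
    · rw [if_neg huv]
      set A : ℝ := ∏ i, ((E i \ {u, v}).card : ℝ) with hA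
      set B : ℝ := ∏ i, ((E i \ {u}).card : ℝ) with hB
      set C : ℝ := ∏ i, ((E i \ {v}).card : ℝ) with hC
      have hkey : N * A ≤ B * C := by
        have hnat : ∏ i, ((E i \ {u, v}).card * r) ≤ ∏ i, ((E i \ {u}).card * (E i \ {v}).card) := by
          refine Finset.prod_le_prod' fun i _ => ?_
          exact aux_card_key (E i) r (hE i) hr u v huv
        have hcast : (∏ i, (((E i \ {u, v}).card : ℝ) * r)) ≤ ∏ i, (((E i \ {u}).card : ℝ) * ((E i \ {v}).card : ℝ)) := by
          exact_mod_cast hnat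
        calc N * A = ∏ i, (((E i \ {u, v}).card : ℝ) * r) := by
              rw [Finset.prod_mul_distrib, hA, hNdef]
              rw [Finset.prod_const, Finset.card_univ, Fintype.card_fin]
              ring
          _ ≤ ∏ i, (((E i \ {u}).card : ℝ) * ((E i \ {v}).card : ℝ)) := hcast
          _ = B * C := by rw [Finset.prod_mul_distrib]
      rw [hSuv, hSu, hSu]
      have heq : (N - B - C + A) / N - (N - B) / N * ((N - C) / N)
          = (N * A - B * C) / (N * N) := by
        field_simp
        ring
      rw [heq]
      apply div_nonpos_of_nonpos_of_nonneg
      · linarith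
      · positivity
  calc (∑ u, ∑ v, ((∑ f : {f : Fin m → V // ∀ i, f i ∈ E i}, I u f * I v f) / N
        - (∑ f, I u f) / N * ((∑ f, I v f) / N)))
      ≤ ∑ u : V, ∑ v : V, (if u = v then (1:ℝ)/4 else 0) := by
        refine Finset.sum_le_sum fun u _ => Finset.sum_le_sum fun v _ => hterm u v
    _ = (n : ℝ) / 4 := by
        simp [Finset.sum_ite_eq, hV]
        ring
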